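/- Let (B, m, u, Δ, ε, c) be a braided bialgebra over a field K with space of primitive elements P = P(B). Let V ⊆ P be a categorical subspace of (B, c) that generates B as a K-algebra, let j : V → P be the inclusion, and let b : P → V be a K-linear map. Then the following are equivalent: (i) j∘b : P → P is a morphism of categorical subspaces of (B, c); (ii) c_V(b⊗id_V) = (id_V⊗b)c_{P,V} and c_V(id_V⊗b) = (b⊗id_V)c_{V,P}, where c_V : V⊗V → V⊗V, c_{P,V} : P⊗V → V⊗P and c_{V,P} : V⊗P → P⊗V are the maps induced by c. -/

import Mathlib

open TensorProduct LinearMap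

noncomputable section

variable (K : Type*) [Field K]

section BraidedDefs

variable (V : Type*) [AddCommGroup V] [Module K V]

/-- The Yang–Baxter (braid) equation for `c : V ⊗ V → V ⊗ V`:
`c₁ c₂ c₁ = c₂ c₁ c₂` on `(V ⊗ V) ⊗ V`, where `c₁ = c ⊗ id` and `c₂ = id ⊗ c`
(transported along the associator). -/
def YangBaxter (c : V ⊗[K] V →ₗ[K] V ⊗[K] V) : Prop :=
  (rTensor V c) ∘ₗ
      ((TensorProduct.assoc K V V V).symm.toLinearMap ∘ₗ (lTensor V c) ∘ₗ
        (TensorProduct.assoc K V V V).toLinearMap) ∘ₗ (rTensor V c)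
    = ((TensorProduct.assoc K V V V).symm.toLinearMap ∘ₗ (lTensor V c) ∘ₗ
        (TensorProduct.assoc K V V V).toLinearMap) ∘ₗ (rTensor V c) ∘ₗ
      ((TensorProduct.assoc K V V V).symm.toLinearMap ∘ₗ (lTensor V c) ∘ₗ
        (TensorProduct.assoc K V V V).toLinearMap)

variable {V}

/-- The image of `L ⊗ V` in `V ⊗ V`, for a subspace `L ≤ V`. -/
def lT (L : Submodule K V) : Submodule K (V ⊗[K] V) :=
  LinearMap.range (rTensor V L.subtype)

/-- The image of `V ⊗ L` in `V ⊗ V`, for a subspace `L ≤ V`. -/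
def rT (L : Submodule K V) : Submodule K (V ⊗[K] V) :=
  LinearMap.range (lTensor V L.subtype)

/-- `L` is a pre-categorical subspace of `(V, c)`:
`c (L⊗V + V⊗L) ⊆ L⊗V + V⊗L`. -/
def IsPreCategorical (c : V ⊗[K] V →ₗ[K] V ⊗[K] V) (L : Submodule K V) : Prop :=
  Submodule.map c (lT K L ⊔ rT K L) ≤ lT K L ⊔ rT K L

/-- `L` is a categorical subspace of `(V, c)`:
`c (L⊗V) ⊆ V⊗L` and `c (V⊗L) ⊆ L⊗V`. -/
def IsCategorical (c : V ⊗[K] V →ₗ[K] V ⊗[K] V) (L : Submodule K V) : Prop :=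
  Submodule.map c (lT K L) ≤ rT K L ∧ Submodule.map c (rT K L) ≤ lT K L

/-- A morphism of braided vector spaces `f : (V, cV) → (W, cW)`:
`cW ∘ (f ⊗ f) = (f ⊗ f) ∘ cV`. -/
def IsBraidedHom {W : Type*} [AddCommGroup W] [Module K W]
    (cV : V ⊗[K] V →ₗ[K] V ⊗[K] V) (cW : W ⊗[K] W →ₗ[K] W ⊗[K] W)
    (f : V →ₗ[K] W) : Prop :=
  cW ∘ₗ TensorProduct.map f f = TensorProduct.map f f ∘ₗ cV

end BraidedDefs

/-- A braided bialgebra `(B, m, u, Δ, ε, c)` over `K`, with all structure maps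
given as `K`-linear maps. -/
structure BB (B : Type*) [AddCommGroup B] [Module K B] where
  /-- multiplication -/
  mul : B ⊗[K] B →ₗ[K] B
  /-- unit -/
  unit : K →ₗ[K] B
  /-- comultiplication -/
  comul : B →ₗ[K] B ⊗[K] B
  /-- counit -/
  counit : B →ₗ[K] K
  /-- braiding -/
  braid : B ⊗[K] B →ₗ[K] B ⊗[K] B
  mul_assoc' : mul ∘ₗ rTensor B mul
      = mul ∘ₗ lTensor B mul ∘ₗ (TensorProduct.assoc K B B B).toLinearMap
  one_mul' : ∀ b : B, mul (unit 1 ⊗ₜ[K] b) = b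
  mul_one' : ∀ b : B, mul (b ⊗ₜ[K] unit 1) = b
  coassoc' : rTensor B comul ∘ₗ comul
      = (TensorProduct.assoc K B B B).symm.toLinearMap ∘ₗ lTensor B comul ∘ₗ comul
  counit_comul' : (TensorProduct.lid K B).toLinearMap ∘ₗ rTensor B counit ∘ₗ comul
      = LinearMap.id
  comul_counit' : (TensorProduct.rid K B).toLinearMap ∘ₗ lTensor B counit ∘ₗ comul
      = LinearMap.id
  yang_baxter' : YangBaxter K B braid
  braid_mul_left : braid ∘ₗ rTensor B mul
      = lTensor B mul ∘ₗ (TensorProduct.assoc K B B B).toLinearMap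
          ∘ₗ rTensor B braid ∘ₗ (TensorProduct.assoc K B B B).symm.toLinearMap
          ∘ₗ lTensor B braid ∘ₗ (TensorProduct.assoc K B B B).toLinearMap
  braid_mul_right : braid ∘ₗ lTensor B mul
      = rTensor B mul ∘ₗ (TensorProduct.assoc K B B B).symm.toLinearMap
          ∘ₗ lTensor B braid ∘ₗ (TensorProduct.assoc K B B B).toLinearMap
          ∘ₗ rTensor B braid ∘ₗ (TensorProduct.assoc K B B B).symm.toLinearMap
  braid_unit_left : ∀ b : B, braid (unit 1 ⊗ₜ[K] b) = b ⊗ₜ[K] unit 1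
  braid_unit_right : ∀ b : B, braid (b ⊗ₜ[K] unit 1) = unit 1 ⊗ₜ[K] b
  comul_braid_left : rTensor B comul ∘ₗ braid
      = (TensorProduct.assoc K B B B).symm.toLinearMap ∘ₗ lTensor B braid
          ∘ₗ (TensorProduct.assoc K B B B).toLinearMap ∘ₗ rTensor B braid
          ∘ₗ (TensorProduct.assoc K B B B).symm.toLinearMap ∘ₗ lTensor B comul
  comul_braid_right : lTensor B comul ∘ₗ braid
      = (TensorProduct.assoc K B B B).toLinearMap ∘ₗ rTensor B braid
          ∘ₗ (TensorProduct.assoc K B B B).symm.toLinearMap ∘ₗ lTensor B braid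
          ∘ₗ (TensorProduct.assoc K B B B).toLinearMap ∘ₗ rTensor B comul
  counit_braid_left : (TensorProduct.lid K B).toLinearMap ∘ₗ rTensor B counit ∘ₗ braid
      = (TensorProduct.rid K B).toLinearMap ∘ₗ lTensor B counit
  counit_braid_right : (TensorProduct.rid K B).toLinearMap ∘ₗ lTensor B counit ∘ₗ braid
      = (TensorProduct.lid K B).toLinearMap ∘ₗ rTensor B counit
  comul_mul' : comul ∘ₗ mul
      = TensorProduct.map mul mul
          ∘ₗ (TensorProduct.assoc K (B ⊗[K] B) B B).toLinearMap
          ∘ₗ rTensor B ((TensorProduct.assoc K B B B).symm.toLinearMap)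
          ∘ₗ rTensor B (lTensor B braid)
          ∘ₗ rTensor B ((TensorProduct.assoc K B B B).toLinearMap)
          ∘ₗ (TensorProduct.assoc K (B ⊗[K] B) B B).symm.toLinearMap
          ∘ₗ TensorProduct.map comul comul

variable {B B' : Type*} [AddCommGroup B] [Module K B] [AddCommGroup B'] [Module K B']

/-- A morphism of braided bialgebras: an algebra map, a coalgebra map and a morphism
of braided vector spaces. -/
def IsBBHom (A : BB K B) (A' : BB K B') (f : B →ₗ[K] B') : Prop :=
  f ∘ₗ A.mul = A'.mul ∘ₗ TensorProduct.map f f ∧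
  f ∘ₗ A.unit = A'.unit ∧
  A'.comul ∘ₗ f = TensorProduct.map f f ∘ₗ A.comul ∧
  A'.counit ∘ₗ f = A.counit ∧
  A'.braid ∘ₗ TensorProduct.map f f = TensorProduct.map f f ∘ₗ A.braid

/-- The space of primitive elements `P(B) = {x : Δ x = x ⊗ 1 + 1 ⊗ x}`. -/
def Prim (A : BB K B) : Submodule K B :=
  LinearMap.ker (A.comul - (TensorProduct.mk K B B).flip (A.unit 1)
    - TensorProduct.mk K B B (A.unit 1))

/-- The product `M · N` of two subspaces of a braided bialgebra `B`. -/
def mulSub (A : BB K B) (M N : Submodule K B) : Submodule K B :=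
  Submodule.map A.mul (LinearMap.range (TensorProduct.map M.subtype N.subtype))

/-- Iterated powers of a subspace `V` in `B`: `V^{·0} = K·1`, `V^{·(n+1)} = V^{·n} · V`. -/
def powSub (A : BB K B) (V : Submodule K B) : ℕ → Submodule K B
  | 0 => LinearMap.range A.unit
  | (n+1) => mulSub K A (powSub A V n) V

/-- `V` generates `B` as a `K`-algebra. -/
def GeneratesAlgebra (A : BB K B) (V : Submodule K B) : Prop :=
  (⨆ n, powSub K A V n) = ⊤

/-- A braided ideal of a braided bialgebra: a two-sided ideal which is a coideal and a
pre-categorical subspace. -/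
def IsBraidedIdeal (A : BB K B) (I : Submodule K B) : Prop :=
  mulSub K A ⊤ I ≤ I ∧ mulSub K A I ⊤ ≤ I ∧
  Submodule.map A.comul I ≤ lT K I ⊔ rT K I ∧
  I ≤ LinearMap.ker A.counit ∧
  IsPreCategorical K A.braid I

/-- The two-sided ideal `B·S·B` of `B` generated by a subspace `S`. -/
def idealGen (A : BB K B) (S : Submodule K B) : Submodule K B :=
  mulSub K A (mulSub K A ⊤ S) ⊤

/-- `(B, γ)` is a `(V, c)`-bialgebra: `γ` is a morphism of braided vector spaces from
`(V, c)` to the infinitesimal part of `B`, and `γ(V)` generates `B` as a `K`-algebra. -/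
def IsVCBialgebra {V : Type*} [AddCommGroup V] [Module K V]
    (c : V ⊗[K] V →ₗ[K] V ⊗[K] V) (A : BB K B) (γ : V →ₗ[K] B) : Prop :=
  LinearMap.range γ ≤ Prim K A ∧
  A.braid ∘ₗ TensorProduct.map γ γ = TensorProduct.map γ γ ∘ₗ c ∧
  GeneratesAlgebra K A (LinearMap.range γ)

section Stmt10Aux

variable {K : Type*} [Field K] {B : Type*} [AddCommGroup B] [Module K B]

set_option synthInstance.maxHeartbeats 400000
set_option maxHeartbeats 1000000

namespace Stmt10Aux

variable {M N M' N' : Type*} [AddCommGroup M] [AddCommGroup N] [AddCommGroup M']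
  [AddCommGroup N'] [Module K M] [Module K N] [Module K M'] [Module K N']

lemma lr (f : M →ₗ[K] M') (g : N →ₗ[K] N') (s : M ⊗[K] N) :
    lTensor M' g (rTensor N f s) = TensorProduct.map f g s := by
  induction s using TensorProduct.induction_on with
  | zero => simp
  | tmul m n => simp
  | add s1 s2 h1 h2 => simp only [map_add, h1, h2]

lemma rl (f : M →ₗ[K] M') (g : N →ₗ[K] N') (t : M ⊗[K] N) :
    rTensor N' f (lTensor M g t) = TensorProduct.map f g t := by
  induction t using TensorProduct.induction_on with
  | zero => simp
  | tmul m n => simp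
  | add t1 t2 h1 h2 => simp only [map_add, h1, h2]

variable (A : BB K B)

/-- The map `Ξ : (B ⊗ P) ⊗ B → B ⊗ P` given by `(b ⊗ q) ⊗ v ↦ (m ⊗ id)(b ⊗ cPB(q ⊗ v))`. -/
def Xi (cPB : ↥(Prim K A) ⊗[K] B →ₗ[K] B ⊗[K] ↥(Prim K A)) :
    (B ⊗[K] ↥(Prim K A)) ⊗[K] B →ₗ[K] B ⊗[K] ↥(Prim K A) :=
  rTensor ↥(Prim K A) A.mul ∘ₗ (TensorProduct.assoc K B B ↥(Prim K A)).symm.toLinearMap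
    ∘ₗ lTensor B cPB ∘ₗ (TensorProduct.assoc K B ↥(Prim K A) B).toLinearMap

/-- The map `Ξ' : B ⊗ (P ⊗ B) → P ⊗ B` given by `y ⊗ (q ⊗ c) ↦ (id ⊗ m)(cBP(y ⊗ q) ⊗ c)`. -/
def Xi' (cBP : B ⊗[K] ↥(Prim K A) →ₗ[K] ↥(Prim K A) ⊗[K] B) :
    B ⊗[K] (↥(Prim K A) ⊗[K] B) →ₗ[K] ↥(Prim K A) ⊗[K] B :=
  lTensor ↥(Prim K A) A.mul ∘ₗ (TensorProduct.assoc K ↥(Prim K A) B B).toLinearMap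
    ∘ₗ rTensor B cBP ∘ₗ (TensorProduct.assoc K B ↥(Prim K A) B).symm.toLinearMap

variable {A}

lemma key_r (cPB : ↥(Prim K A) ⊗[K] B →ₗ[K] B ⊗[K] ↥(Prim K A))
    (h : ↥(Prim K A) →ₗ[K] B) (y v : B)
    (Hy : ∀ p : ↥(Prim K A), A.braid (h p ⊗ₜ[K] y) = lTensor B h (cPB (p ⊗ₜ[K] y)))
    (Hv : ∀ q : ↥(Prim K A), A.braid (h q ⊗ₜ[K] v) = lTensor B h (cPB (q ⊗ₜ[K] v)))
    (p : ↥(Prim K A)) :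
    A.braid (h p ⊗ₜ[K] A.mul (y ⊗ₜ[K] v))
      = lTensor B h (Xi A cPB (cPB (p ⊗ₜ[K] y) ⊗ₜ[K] v)) := by
  have h0 := LinearMap.congr_fun A.braid_mul_right (h p ⊗ₜ[K] (y ⊗ₜ[K] v))
  simp only [comp_apply, lTensor_tmul, LinearEquiv.coe_coe,
    TensorProduct.assoc_symm_tmul, rTensor_tmul] at h0
  rw [Hy p] at h0
  rw [h0]
  generalize cPB (p ⊗ₜ[K] y) = t
  induction t using TensorProduct.induction_on with
  | zero => simp [Xi]
  | tmul b' q =>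
    simp only [lTensor_tmul, LinearEquiv.coe_coe, TensorProduct.assoc_tmul, Xi, comp_apply]
    rw [Hv q]
    generalize cPB (q ⊗ₜ[K] v) = s
    induction s using TensorProduct.induction_on with
    | zero => simp
    | tmul c q' => simp
    | add s1 s2 hs1 hs2 =>
      simp only [map_add, TensorProduct.tmul_add] at hs1 hs2 ⊢
      rw [hs1, hs2]
  | add t1 t2 ht1 ht2 =>
    simp only [map_add, TensorProduct.add_tmul] at ht1 ht2 ⊢
    rw [ht1, ht2]

lemma key_l (cBP : B ⊗[K] ↥(Prim K A) →ₗ[K] ↥(Prim K A) ⊗[K] B)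
    (h : ↥(Prim K A) →ₗ[K] B) (y v : B)
    (Hv : ∀ p : ↥(Prim K A), A.braid (v ⊗ₜ[K] h p) = rTensor B h (cBP (v ⊗ₜ[K] p)))
    (Hy : ∀ q : ↥(Prim K A), A.braid (y ⊗ₜ[K] h q) = rTensor B h (cBP (y ⊗ₜ[K] q)))
    (p : ↥(Prim K A)) :
    A.braid (A.mul (y ⊗ₜ[K] v) ⊗ₜ[K] h p)
      = rTensor B h (Xi' A cBP (y ⊗ₜ[K] cBP (v ⊗ₜ[K] p))) := by
  have h0 := LinearMap.congr_fun A.braid_mul_left ((y ⊗ₜ[K] v) ⊗ₜ[K] h p)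
  simp only [comp_apply, rTensor_tmul, LinearEquiv.coe_coe,
    TensorProduct.assoc_tmul, lTensor_tmul] at h0
  rw [Hv p] at h0
  rw [h0]
  generalize cBP (v ⊗ₜ[K] p) = s
  induction s using TensorProduct.induction_on with
  | zero => simp [Xi']
  | tmul q c =>
    simp only [rTensor_tmul, LinearEquiv.coe_coe, TensorProduct.assoc_symm_tmul, Xi', comp_apply]
    rw [Hy q]
    generalize cBP (y ⊗ₜ[K] q) = t
    induction t using TensorProduct.induction_on with
    | zero => simp
    | tmul q' d => simp
    | add t1 t2 ht1 ht2 =>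
      simp only [map_add, TensorProduct.add_tmul] at ht1 ht2 ⊢
      rw [ht1, ht2]
  | add s1 s2 hs1 hs2 =>
    simp only [map_add, TensorProduct.tmul_add] at hs1 hs2 ⊢
    rw [hs1, hs2]

end Stmt10Aux

end Stmt10Aux

section Stmt10Aux2

set_option synthInstance.maxHeartbeats 400000
set_option maxHeartbeats 1000000

namespace Stmt10Aux

variable {K : Type*} [Field K] {B : Type*} [AddCommGroup B] [Module K B] {A : BB K B}

lemma injl : Function.Injective (lTensor B (Prim K A).subtype) :=
  Module.Flat.lTensor_preserves_injective_linearMap _ (Prim K A).injective_subtype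

lemma injr : Function.Injective (rTensor B (Prim K A).subtype) :=
  Module.Flat.rTensor_preserves_injective_linearMap _ (Prim K A).injective_subtype

section Right

variable (cPB : ↥(Prim K A) ⊗[K] B →ₗ[K] B ⊗[K] ↥(Prim K A))
  (hcPB : lTensor B (Prim K A).subtype ∘ₗ cPB = A.braid ∘ₗ rTensor B (Prim K A).subtype)

include hcPB

lemma hcPB' (p : ↥(Prim K A)) (x : B) :
    lTensor B (Prim K A).subtype (cPB (p ⊗ₜ[K] x)) = A.braid ((p : B) ⊗ₜ[K] x) := by
  have := LinearMap.congr_fun hcPB (p ⊗ₜ[K] x)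
  simpa using this

lemma cPB_unit (p : ↥(Prim K A)) : cPB (p ⊗ₜ[K] A.unit 1) = A.unit 1 ⊗ₜ[K] p := by
  apply injl
  rw [hcPB' cPB hcPB, A.braid_unit_right]
  simp

lemma cPB_mul (y v : B) (p : ↥(Prim K A)) :
    cPB (p ⊗ₜ[K] A.mul (y ⊗ₜ[K] v)) = Xi A cPB (cPB (p ⊗ₜ[K] y) ⊗ₜ[K] v) := by
  apply injl
  rw [hcPB' cPB hcPB]
  exact key_r cPB (Prim K A).subtype y v
    (fun q => (hcPB' cPB hcPB q y).symm) (fun q => (hcPB' cPB hcPB q v).symm) p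

lemma gen_right {V : Submodule K B} (hgen : GeneratesAlgebra K A V)
    (g : ↥(Prim K A) →ₗ[K] B)
    (hV : ∀ (q : ↥(Prim K A)) (x : B), x ∈ V →
      A.braid (g q ⊗ₜ[K] x) = lTensor B g (cPB (q ⊗ₜ[K] x)))
    (x : B) (p : ↥(Prim K A)) :
    A.braid (g p ⊗ₜ[K] x) = lTensor B g (cPB (p ⊗ₜ[K] x)) := by
  have hpow : ∀ n, ∀ x ∈ powSub K A V n, ∀ p : ↥(Prim K A),
      A.braid (g p ⊗ₜ[K] x) = lTensor B g (cPB (p ⊗ₜ[K] x)) := by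
    intro n
    induction n with
    | zero =>
      rintro x ⟨k, rfl⟩ p
      have hk : A.unit k = k • A.unit 1 := by rw [← map_smul, smul_eq_mul, mul_one]
      rw [hk]
      simp only [TensorProduct.tmul_smul, map_smul, A.braid_unit_right,
        cPB_unit cPB hcPB, lTensor_tmul]
    | succ n ih =>
      rintro x ⟨z, hz, rfl⟩
      replace hz : z ∈ Submodule.span K
          {t | ∃ (a : ↥(powSub K A V n)) (c : ↥V),
            (powSub K A V n).subtype a ⊗ₜ[K] V.subtype c = t} := by
        rw [← TensorProduct.range_map_eq_span_tmul]; exact hz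
      induction hz using Submodule.span_induction with
      | mem z hzmem =>
        obtain ⟨a, c, rfl⟩ := hzmem
        intro p
        simp only [Submodule.subtype_apply]
        rw [key_r cPB g _ _ (fun q => ih _ a.2 q) (fun q => hV q _ c.2) p,
          cPB_mul cPB hcPB]
      | zero => intro p; simp
      | add z1 z2 hz1 hz2 h1 h2 =>
        intro p
        simp only [map_add, TensorProduct.tmul_add, h1 p, h2 p]
      | smul k z hzmem h1 =>
        intro p
        simp only [map_smul, TensorProduct.tmul_smul, h1 p]
  have hx : x ∈ ⨆ n, powSub K A V n := by rw [hgen]; trivial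
  refine Submodule.iSup_induction (motive := fun x => ∀ p : ↥(Prim K A),
      A.braid (g p ⊗ₜ[K] x) = lTensor B g (cPB (p ⊗ₜ[K] x)))
    (fun n => powSub K A V n) hx hpow ?_ ?_ p
  · intro p; simp
  · intro x y hx hy p
    simp only [TensorProduct.tmul_add, map_add, hx p, hy p]

end Right

section Left

variable (cBP : B ⊗[K] ↥(Prim K A) →ₗ[K] ↥(Prim K A) ⊗[K] B)
  (hcBP : rTensor B (Prim K A).subtype ∘ₗ cBP = A.braid ∘ₗ lTensor B (Prim K A).subtype)

include hcBP

lemma hcBP' (x : B) (p : ↥(Prim K A)) :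
    rTensor B (Prim K A).subtype (cBP (x ⊗ₜ[K] p)) = A.braid (x ⊗ₜ[K] (p : B)) := by
  have := LinearMap.congr_fun hcBP (x ⊗ₜ[K] p)
  simpa using this

lemma cBP_unit (p : ↥(Prim K A)) : cBP (A.unit 1 ⊗ₜ[K] p) = p ⊗ₜ[K] A.unit 1 := by
  apply injr
  rw [hcBP' cBP hcBP, A.braid_unit_left]
  simp

lemma cBP_mul (y v : B) (p : ↥(Prim K A)) :
    cBP (A.mul (y ⊗ₜ[K] v) ⊗ₜ[K] p) = Xi' A cBP (y ⊗ₜ[K] cBP (v ⊗ₜ[K] p)) := by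
  apply injr
  rw [hcBP' cBP hcBP]
  exact key_l cBP (Prim K A).subtype y v
    (fun q => (hcBP' cBP hcBP v q).symm) (fun q => (hcBP' cBP hcBP y q).symm) p

lemma gen_left {V : Submodule K B} (hgen : GeneratesAlgebra K A V)
    (g : ↥(Prim K A) →ₗ[K] B)
    (hV : ∀ (q : ↥(Prim K A)) (x : B), x ∈ V →
      A.braid (x ⊗ₜ[K] g q) = rTensor B g (cBP (x ⊗ₜ[K] q)))
    (x : B) (p : ↥(Prim K A)) :
    A.braid (x ⊗ₜ[K] g p) = rTensor B g (cBP (x ⊗ₜ[K] p)) := by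
  have hpow : ∀ n, ∀ x ∈ powSub K A V n, ∀ p : ↥(Prim K A),
      A.braid (x ⊗ₜ[K] g p) = rTensor B g (cBP (x ⊗ₜ[K] p)) := by
    intro n
    induction n with
    | zero =>
      rintro x ⟨k, rfl⟩ p
      have hk : A.unit k = k • A.unit 1 := by rw [← map_smul, smul_eq_mul, mul_one]
      rw [hk]
      simp only [TensorProduct.smul_tmul, TensorProduct.tmul_smul, map_smul,
        A.braid_unit_left, cBP_unit cBP hcBP, rTensor_tmul]
    | succ n ih =>
      rintro x ⟨z, hz, rfl⟩
      replace hz : z ∈ Submodule.span K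
          {t | ∃ (a : ↥(powSub K A V n)) (c : ↥V),
            (powSub K A V n).subtype a ⊗ₜ[K] V.subtype c = t} := by
        rw [← TensorProduct.range_map_eq_span_tmul]; exact hz
      induction hz using Submodule.span_induction with
      | mem z hzmem =>
        obtain ⟨a, c, rfl⟩ := hzmem
        intro p
        simp only [Submodule.subtype_apply]
        rw [key_l cBP g _ _ (fun q => hV q _ c.2) (fun q => ih _ a.2 q) p,
          cBP_mul cBP hcBP]
      | zero => intro p; simp
      | add z1 z2 hz1 hz2 h1 h2 =>
        intro p
        simp only [map_add, TensorProduct.add_tmul, h1 p, h2 p]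
      | smul k z hzmem h1 =>
        intro p
        simp only [TensorProduct.smul_tmul, TensorProduct.tmul_smul, map_smul, h1 p]
  have hx : x ∈ ⨆ n, powSub K A V n := by rw [hgen]; trivial
  refine Submodule.iSup_induction (motive := fun x => ∀ p : ↥(Prim K A),
      A.braid (x ⊗ₜ[K] g p) = rTensor B g (cBP (x ⊗ₜ[K] p)))
    (fun n => powSub K A V n) hx hpow ?_ ?_ p
  · intro p; simp
  · intro x y hx hy p
    simp only [TensorProduct.add_tmul, map_add, hx p, hy p]

end Left

end Stmt10Aux
end Stmt10Aux2

/-- Let `V ⊆ P(B)` be a categorical subspace generating the braided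
bialgebra `B` as an algebra, `j : V → P` the inclusion and `b : P → V` linear.  Then
`j ∘ b` is a morphism of categorical subspaces of `(B, c)` iff `b` satisfies the two
bracket compatibility conditions.  All induced maps (`c_{P,B}`, `c_{B,P}`, `c_V`,
`c_{P,V}`, `c_{V,P}`) are given with their characterizing equations. -/
theorem stmt_10 {B : Type*} [AddCommGroup B] [Module K B] (A : BB K B)
    (V : Submodule K B) (hVP : V ≤ Prim K A)
    (hVcat : IsCategorical K A.braid V) (hgen : GeneratesAlgebra K A V)
    (cPB : ↥(Prim K A) ⊗[K] B →ₗ[K] B ⊗[K] ↥(Prim K A))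
    (cBP : B ⊗[K] ↥(Prim K A) →ₗ[K] ↥(Prim K A) ⊗[K] B)
    (hcPB : lTensor B (Prim K A).subtype ∘ₗ cPB = A.braid ∘ₗ rTensor B (Prim K A).subtype)
    (hcBP : rTensor B (Prim K A).subtype ∘ₗ cBP = A.braid ∘ₗ lTensor B (Prim K A).subtype)
    (cVV : ↥V ⊗[K] ↥V →ₗ[K] ↥V ⊗[K] ↥V)
    (hcVV : TensorProduct.map V.subtype V.subtype ∘ₗ cVV
        = A.braid ∘ₗ TensorProduct.map V.subtype V.subtype)
    (cPV : ↥(Prim K A) ⊗[K] ↥V →ₗ[K] ↥V ⊗[K] ↥(Prim K A))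
    (hcPV : TensorProduct.map V.subtype (Prim K A).subtype ∘ₗ cPV
        = A.braid ∘ₗ TensorProduct.map (Prim K A).subtype V.subtype)
    (cVP : ↥V ⊗[K] ↥(Prim K A) →ₗ[K] ↥(Prim K A) ⊗[K] ↥V)
    (hcVP : TensorProduct.map (Prim K A).subtype V.subtype ∘ₗ cVP
        = A.braid ∘ₗ TensorProduct.map V.subtype (Prim K A).subtype)
    (b : ↥(Prim K A) →ₗ[K] ↥V) :
    (cPB ∘ₗ rTensor B (Submodule.inclusion hVP ∘ₗ b)
        = lTensor B (Submodule.inclusion hVP ∘ₗ b) ∘ₗ cPB ∧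
     cBP ∘ₗ lTensor B (Submodule.inclusion hVP ∘ₗ b)
        = rTensor B (Submodule.inclusion hVP ∘ₗ b) ∘ₗ cBP)
    ↔ (cVV ∘ₗ rTensor ↥V b = lTensor ↥V b ∘ₗ cPV ∧
       cVV ∘ₗ lTensor ↥V b = rTensor ↥V b ∘ₗ cVP) := by
  
  have injVV : Function.Injective ⇑(TensorProduct.map V.subtype V.subtype) := by
    rw [← LinearMap.lTensor_comp_rTensor, LinearMap.coe_comp]
    exact (Module.Flat.lTensor_preserves_injective_linearMap _ V.injective_subtype).comp
      (Module.Flat.rTensor_preserves_injective_linearMap _ V.injective_subtype)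
  set g' : ↥(Prim K A) →ₗ[K] B := V.subtype ∘ₗ b with hg'
  set j' : ↥(Prim K A) →ₗ[K] ↥(Prim K A) := Submodule.inclusion hVP ∘ₗ b with hj'
  have hcomp : (Prim K A).subtype ∘ₗ j' = g' := by
    rw [hj', hg', ← LinearMap.comp_assoc, Submodule.subtype_comp_inclusion]
  have hcoe : ∀ q : ↥(Prim K A), ((j' q : ↥(Prim K A)) : B) = g' q := by
    intro q
    simpa using LinearMap.congr_fun hcomp q
  have hcPB'' := Stmt10Aux.hcPB' cPB hcPB
  have hcBP'' := Stmt10Aux.hcBP' cBP hcBP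
  have hcVV' : ∀ (v w : ↥V),
      TensorProduct.map V.subtype V.subtype (cVV (v ⊗ₜ[K] w))
        = A.braid ((v : B) ⊗ₜ[K] (w : B)) :=
    fun v w => by simpa using LinearMap.congr_fun hcVV (v ⊗ₜ[K] w)
  have hcPV' : ∀ (p : ↥(Prim K A)) (v : ↥V),
      TensorProduct.map V.subtype (Prim K A).subtype (cPV (p ⊗ₜ[K] v))
        = A.braid ((p : B) ⊗ₜ[K] (v : B)) :=
    fun p v => by simpa using LinearMap.congr_fun hcPV (p ⊗ₜ[K] v)
  have hcVP' : ∀ (v : ↥V) (p : ↥(Prim K A)),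
      TensorProduct.map (Prim K A).subtype V.subtype (cVP (v ⊗ₜ[K] p))
        = A.braid ((v : B) ⊗ₜ[K] (p : B)) :=
    fun v p => by simpa using LinearMap.congr_fun hcVP (v ⊗ₜ[K] p)
  have HlrP : ∀ s : ↥V ⊗[K] ↥(Prim K A),
      lTensor B (Prim K A).subtype (rTensor ↥(Prim K A) V.subtype s)
        = TensorProduct.map V.subtype (Prim K A).subtype s :=
    fun s => Stmt10Aux.lr V.subtype (Prim K A).subtype s
  have HrlP : ∀ t : ↥(Prim K A) ⊗[K] ↥V,
      rTensor B (Prim K A).subtype (lTensor ↥(Prim K A) V.subtype t)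
        = TensorProduct.map (Prim K A).subtype V.subtype t :=
    fun t => Stmt10Aux.rl (Prim K A).subtype V.subtype t
  have Hlr : ∀ s : ↥V ⊗[K] ↥(Prim K A),
      lTensor B g' (rTensor ↥(Prim K A) V.subtype s) = TensorProduct.map V.subtype g' s :=
    fun s => Stmt10Aux.lr V.subtype g' s
  have Hrl : ∀ t : ↥(Prim K A) ⊗[K] ↥V,
      rTensor B g' (lTensor ↥(Prim K A) V.subtype t) = TensorProduct.map g' V.subtype t :=
    fun t => Stmt10Aux.rl g' V.subtype t
  have Hll : ∀ u : B ⊗[K] ↥(Prim K A),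
      lTensor B (Prim K A).subtype (lTensor B j' u) = lTensor B g' u := by
    intro u
    rw [← LinearMap.lTensor_comp_apply, hcomp]
  have Hrr : ∀ u : ↥(Prim K A) ⊗[K] B,
      rTensor B (Prim K A).subtype (rTensor B j' u) = rTensor B g' u := by
    intro u
    rw [← LinearMap.rTensor_comp_apply, hcomp]
  have hins : ∀ s : ↥V ⊗[K] ↥(Prim K A),
      TensorProduct.map V.subtype V.subtype (lTensor ↥V b s)
        = TensorProduct.map V.subtype g' s := by
    intro s
    induction s using TensorProduct.induction_on with
    | zero => simp
    | tmul v q => simp [hg']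
    | add s1 s2 h1 h2 => simp only [map_add, h1, h2]
  have hins2 : ∀ t : ↥(Prim K A) ⊗[K] ↥V,
      TensorProduct.map V.subtype V.subtype (rTensor ↥V b t)
        = TensorProduct.map g' V.subtype t := by
    intro t
    induction t using TensorProduct.induction_on with
    | zero => simp
    | tmul q v => simp [hg']
    | add t1 t2 h1 h2 => simp only [map_add, h1, h2]
  have bridge1 : ∀ (p : ↥(Prim K A)) (v : ↥V),
      cPB (p ⊗ₜ[K] (v : B)) = rTensor ↥(Prim K A) V.subtype (cPV (p ⊗ₜ[K] v)) := by
    intro p v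
    apply Stmt10Aux.injl
    rw [hcPB'' p (v : B), ← hcPV' p v, HlrP]
  have bridge2 : ∀ (v : ↥V) (p : ↥(Prim K A)),
      cBP ((v : B) ⊗ₜ[K] p) = lTensor ↥(Prim K A) V.subtype (cVP (v ⊗ₜ[K] p)) := by
    intro v p
    apply Stmt10Aux.injr
    rw [hcBP'' (v : B) p, ← hcVP' v p, HrlP]
  constructor
  · rintro ⟨h1, h2⟩
    have S1 : ∀ (p : ↥(Prim K A)) (x : B),
        A.braid (g' p ⊗ₜ[K] x) = lTensor B g' (cPB (p ⊗ₜ[K] x)) := by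
      intro p x
      have ht := LinearMap.congr_fun h1 (p ⊗ₜ[K] x)
      simp only [LinearMap.comp_apply, rTensor_tmul] at ht
      calc A.braid (g' p ⊗ₜ[K] x)
          = lTensor B (Prim K A).subtype (cPB (j' p ⊗ₜ[K] x)) := by
            rw [hcPB'' (j' p) x, hcoe p]
        _ = lTensor B (Prim K A).subtype (lTensor B j' (cPB (p ⊗ₜ[K] x))) := by rw [ht]
        _ = lTensor B g' (cPB (p ⊗ₜ[K] x)) := Hll _
    have S2 : ∀ (p : ↥(Prim K A)) (x : B),
        A.braid (x ⊗ₜ[K] g' p) = rTensor B g' (cBP (x ⊗ₜ[K] p)) := by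
      intro p x
      have ht := LinearMap.congr_fun h2 (x ⊗ₜ[K] p)
      simp only [LinearMap.comp_apply, lTensor_tmul] at ht
      calc A.braid (x ⊗ₜ[K] g' p)
          = rTensor B (Prim K A).subtype (cBP (x ⊗ₜ[K] j' p)) := by
            rw [hcBP'' x (j' p), hcoe p]
        _ = rTensor B (Prim K A).subtype (rTensor B j' (cBP (x ⊗ₜ[K] p))) := by rw [ht]
        _ = rTensor B g' (cBP (x ⊗ₜ[K] p)) := Hrr _
    constructor
    · apply TensorProduct.ext'
      intro p v
      apply injVV
      simp only [LinearMap.comp_apply, rTensor_tmul, lTensor_tmul]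
      rw [hcVV' (b p) v, hins, show ((b p : B)) = g' p from rfl, ← Hlr, ← bridge1 p v]
      exact S1 p (v : B)
    · apply TensorProduct.ext'
      intro v p
      apply injVV
      simp only [LinearMap.comp_apply, rTensor_tmul, lTensor_tmul]
      rw [hcVV' v (b p), hins2, show ((b p : B)) = g' p from rfl, ← Hrl, ← bridge2 v p]
      exact S2 p (v : B)
  · rintro ⟨h3, h4⟩
    have SV1 : ∀ (q : ↥(Prim K A)) (x : B), x ∈ V →
        A.braid (g' q ⊗ₜ[K] x) = lTensor B g' (cPB (q ⊗ₜ[K] x)) := by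
      intro q x hx
      have ht := LinearMap.congr_fun h3 (q ⊗ₜ[K] (⟨x, hx⟩ : ↥V))
      simp only [LinearMap.comp_apply, rTensor_tmul] at ht
      calc A.braid (g' q ⊗ₜ[K] x)
          = TensorProduct.map V.subtype V.subtype (cVV (b q ⊗ₜ[K] (⟨x, hx⟩ : ↥V))) :=
            (hcVV' (b q) ⟨x, hx⟩).symm
        _ = TensorProduct.map V.subtype V.subtype
              (lTensor ↥V b (cPV (q ⊗ₜ[K] (⟨x, hx⟩ : ↥V)))) := by rw [ht]
        _ = TensorProduct.map V.subtype g' (cPV (q ⊗ₜ[K] (⟨x, hx⟩ : ↥V))) := hins _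
        _ = lTensor B g' (rTensor ↥(Prim K A) V.subtype
              (cPV (q ⊗ₜ[K] (⟨x, hx⟩ : ↥V)))) := (Hlr _).symm
        _ = lTensor B g' (cPB (q ⊗ₜ[K] x)) := by rw [← bridge1 q ⟨x, hx⟩]
    have SV2 : ∀ (q : ↥(Prim K A)) (x : B), x ∈ V →
        A.braid (x ⊗ₜ[K] g' q) = rTensor B g' (cBP (x ⊗ₜ[K] q)) := by
      intro q x hx
      have ht := LinearMap.congr_fun h4 ((⟨x, hx⟩ : ↥V) ⊗ₜ[K] q)
      simp only [LinearMap.comp_apply, lTensor_tmul] at ht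
      calc A.braid (x ⊗ₜ[K] g' q)
          = TensorProduct.map V.subtype V.subtype (cVV ((⟨x, hx⟩ : ↥V) ⊗ₜ[K] b q)) :=
            (hcVV' ⟨x, hx⟩ (b q)).symm
        _ = TensorProduct.map V.subtype V.subtype
              (rTensor ↥V b (cVP ((⟨x, hx⟩ : ↥V) ⊗ₜ[K] q))) := by rw [ht]
        _ = TensorProduct.map g' V.subtype (cVP ((⟨x, hx⟩ : ↥V) ⊗ₜ[K] q)) := hins2 _
        _ = rTensor B g' (lTensor ↥(Prim K A) V.subtype
              (cVP ((⟨x, hx⟩ : ↥V) ⊗ₜ[K] q))) := (Hrl _).symm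
        _ = rTensor B g' (cBP (x ⊗ₜ[K] q)) := by rw [← bridge2 ⟨x, hx⟩ q]
    have S1 := Stmt10Aux.gen_right cPB hcPB hgen g' SV1
    have S2 := Stmt10Aux.gen_left cBP hcBP hgen g' SV2
    constructor
    · apply TensorProduct.ext'
      intro p x
      apply Stmt10Aux.injl
      simp only [LinearMap.comp_apply, rTensor_tmul]
      rw [hcPB'' (j' p) x, hcoe p, Hll]
      exact S1 x p
    · apply TensorProduct.ext'
      intro x p
      apply Stmt10Aux.injr
      simp only [LinearMap.comp_apply, lTensor_tmul]
      rw [hcBP'' x (j' p), hcoe p, Hrr]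
      exact S2 x p
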